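/- For every monic polynomial f(t) ∈ ℝ[t] of degree n there exists an n×n X-matrix A with real entries whose characteristic polynomial equals f: det(tI − A) = f(t). -/

import Mathlib

open Matrix Polynomial

/-- An `n × n` matrix is an X-matrix if every entry off the diagonal and off the
anti-diagonal (1-based: `i ≠ j` and `i + j ≠ n + 1`) vanishes. -/
def IsXMatrix {n : ℕ} {K : Type*} [Zero K] (A : Matrix (Fin n) (Fin n) K) : Prop :=
  ∀ i j : Fin n, i ≠ j → j ≠ i.rev → A i j = 0

lemma monic_deg_two_eq {q : Polynomial ℝ} (hq : q.Monic) (h2 : q.natDegree = 2) :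
    q = X ^ 2 + C (q.coeff 1) * X + C (q.coeff 0) := by
  have hl : q.coeff 2 = 1 := by
    have := hq.coeff_natDegree; rwa [h2] at this
  ext k
  match k with
  | 0 => simp
  | 1 => simp
  | 2 => simp [hl, coeff_X_pow]
  | (k + 3) =>
    rw [coeff_eq_zero_of_natDegree_lt (by omega)]
    simp [coeff_X_pow, coeff_C]

lemma exists_fin_two_charpoly {q : Polynomial ℝ} (hq : q.Monic) (h2 : q.natDegree = 2) :
    ∃ M : Matrix (Fin 2) (Fin 2) ℝ, M.charpoly = q := by
  refine ⟨!![0, -q.coeff 0; 1, -q.coeff 1], ?_⟩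
  have h : (!![0, -q.coeff 0; 1, -q.coeff 1] : Matrix (Fin 2) (Fin 2) ℝ).charpoly
      = X ^ 2 + C (q.coeff 1) * X + C (q.coeff 0) := by
    rw [Matrix.charpoly, Matrix.det_fin_two]
    rw [charmatrix_apply_eq, charmatrix_apply_eq,
        charmatrix_apply_ne _ _ _ (by decide), charmatrix_apply_ne _ _ _ (by decide)]
    norm_num
    ring
  rw [h, ← monic_deg_two_eq hq h2]

lemma step_factor {h : Polynomial ℝ} (hm : h.Monic) (h1 : 1 ≤ h.natDegree) :
    ∃ p r : Polynomial ℝ, p.Monic ∧ (p.natDegree = 1 ∨ p.natDegree = 2) ∧ r.Monic ∧ h = p * r := by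
  obtain ⟨p, hpm, hpi, hdvd⟩ :=
    h.exists_monic_irreducible_factor (not_isUnit_of_natDegree_pos _ h1)
  obtain ⟨r, rfl⟩ := hdvd
  have hrm : r.Monic := hpm.of_mul_monic_left hm
  have hle : p.natDegree ≤ 2 := hpi.natDegree_le_two
  have hge : 1 ≤ p.natDegree := natDegree_pos_iff_degree_pos.2 (degree_pos_of_irreducible hpi)
  exact ⟨p, r, hpm, by omega, hrm, rfl⟩

lemma exists_quadratic_factor {f : Polynomial ℝ} (hf : f.Monic) (h2 : 2 ≤ f.natDegree) :
    ∃ q g : Polynomial ℝ, q.Monic ∧ q.natDegree = 2 ∧ g.Monic ∧ f = q * g := by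
  obtain ⟨p, r, hpm, hpd, hrm, hfe⟩ := step_factor hf (by omega)
  rcases hpd with hpd | hpd
  · have hdr : f.natDegree = p.natDegree + r.natDegree := by
      rw [hfe, hpm.natDegree_mul hrm]
    have hr1 : 1 ≤ r.natDegree := by omega
    obtain ⟨p', r', hp'm, hp'd, hr'm, hre⟩ := step_factor hrm hr1
    rcases hp'd with hp'd | hp'd
    · refine ⟨p * p', r', hpm.mul hp'm, ?_, hr'm, ?_⟩
      · rw [hpm.natDegree_mul hp'm, hpd, hp'd]
      · rw [hfe, hre, mul_assoc]
    · refine ⟨p', p * r', hp'm, hp'd, hpm.mul hr'm, ?_⟩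
      rw [hfe, hre]; ring
  · exact ⟨p, r, hpm, hpd, hrm, hfe⟩

/-- The equivalence sending `inl 0 ↦ 0`, `inl 1 ↦ last`, `inr i ↦ i + 1`. -/
def frameEquiv (n : ℕ) : Fin 2 ⊕ Fin n ≃ Fin (n + 2) where
  toFun := Sum.elim (fun a => if a = 0 then 0 else Fin.last (n + 1))
    (fun i => ⟨(i : ℕ) + 1, by omega⟩)
  invFun k := if h : (k : ℕ) = 0 then Sum.inl 0
    else if h' : (k : ℕ) = n + 1 then Sum.inl 1
    else Sum.inr ⟨(k : ℕ) - 1, by have := k.isLt; omega⟩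
  left_inv := by
    rintro (a | i)
    · fin_cases a <;> simp [Fin.last]
    · have h1 : (i : ℕ) + 1 ≠ 0 := by omega
      have h2 : (i : ℕ) + 1 ≠ n + 1 := by have := i.isLt; omega
      simp [h1, h2, i.isLt.ne]
  right_inv k := by
    have := k.isLt
    by_cases h : (k : ℕ) = 0
    · simp [h]
      exact Fin.ext (by simp [h])
    · by_cases h' : (k : ℕ) = n + 1
      · simp [h, h']
        exact Fin.ext (by simp [Fin.last, h'])
      · simp [h, h']
        exact Fin.ext (by simp; omega)

lemma frame_step {n : ℕ} (B : Matrix (Fin n) (Fin n) ℝ) (hB : IsXMatrix B)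
    (M : Matrix (Fin 2) (Fin 2) ℝ) :
    ∃ A : Matrix (Fin (n + 2)) (Fin (n + 2)) ℝ,
      IsXMatrix A ∧ A.charpoly = M.charpoly * B.charpoly := by
  set e := frameEquiv n
  refine ⟨(reindex e e) (fromBlocks M 0 0 B), ?_, ?_⟩
  · intro i j hij hrev
    obtain ⟨i', rfl⟩ := e.surjective i
    obtain ⟨j', rfl⟩ := e.surjective j
    rw [reindex_apply, submatrix_apply, Equiv.symm_apply_apply, Equiv.symm_apply_apply]
    rcases i' with a | a <;> rcases j' with b | b
    · exfalso
      fin_cases a <;> fin_cases b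
      · exact hij rfl
      · apply hrev
        apply Fin.ext
        simp [e, frameEquiv, Fin.rev, Fin.last]
      · apply hrev
        apply Fin.ext
        simp [e, frameEquiv, Fin.rev, Fin.last]
      · exact hij rfl
    · simp [fromBlocks]
    · simp [fromBlocks]
    · rw [fromBlocks_apply₂₂]
      refine hB a b ?_ ?_
      · rintro rfl; exact hij rfl
      · rintro rfl
        apply hrev
        apply Fin.ext
        have := a.isLt
        simp [e, frameEquiv, Fin.rev]
        omega
  · rw [charpoly_reindex, charpoly_fromBlocks_zero₁₂]

/-- Every monic real polynomial of degree `n` is the characteristic polynomial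
`det (t I - A)` of some `n × n` real X-matrix `A`. -/
theorem exists_xMatrix_companion {n : ℕ} (f : Polynomial ℝ)
    (hmonic : f.Monic) (hdeg : f.natDegree = n) :
    ∃ A : Matrix (Fin n) (Fin n) ℝ, IsXMatrix A ∧ A.charpoly = f := by
  induction n using Nat.strong_induction_on generalizing f with
  | _ n ih =>
  obtain _ | _ | m := n
  · have hf1 : f = 1 := hmonic.natDegree_eq_zero.mp hdeg
    refine ⟨0, fun i => i.elim0, ?_⟩
    rw [hf1]
    simp [Matrix.charpoly, Matrix.det_isEmpty]
  · refine ⟨fun _ _ => -f.coeff 0, ?_, ?_⟩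
    · intro i j hij _
      exact absurd (Fin.ext (by omega)) hij
    · unfold Matrix.charpoly
      rw [Matrix.det_fin_one]
      show (X : ℝ[X]) - C (-f.coeff 0) = f
      rw [map_neg, sub_neg_eq_add]
      exact (hmonic.eq_X_add_C hdeg).symm
  · obtain ⟨q, g, hqm, hqd, hgm, hfe⟩ := exists_quadratic_factor hmonic (by omega)
    have hgd : g.natDegree = m := by
      have : f.natDegree = q.natDegree + g.natDegree := by rw [hfe, hqm.natDegree_mul hgm]
      omega
    obtain ⟨B, hXB, hBc⟩ := ih m (by omega) g hgm hgd
    obtain ⟨M, hMc⟩ := exists_fin_two_charpoly hqm hqd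
    obtain ⟨A, hXA, hAc⟩ := frame_step B hXB M
    exact ⟨A, hXA, by rw [hAc, hMc, hBc, hfe]⟩
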